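/- arXiv:2308.15596 — 2 statements merged into one kernel-verified Lean document; each statement's English description precedes it below -/
import Mathlib

section
/- For a discrete outcome Y supported on ℕ with conditional CDF F(·|X), the unconditional distribution of the probability integral transform is G_0(s) := Pr(F(Y|X) ≤ s) = E_X[F(F^{(-1)}(s|X) | X)] for all s ∈ (0,1). -/
open MeasureTheory ProbabilityTheory

/- For a discrete outcome `Y` supported on `ℕ` with conditional CDF `F(·|X)` (given by a
Markov kernel `κ`, with `X ~ μ`), the unconditional distribution of the probability
integral transform is
`G₀(s) := Pr(F(Y|X) ≤ s) = E_X[F(F⁽⁻¹⁾(s|X) | X)]` for all `s ∈ (0,1)`,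
where `F⁽⁻¹⁾(s|x) = sup {k ∈ ℕ : F(k|x) ≤ s}` and the integrand is `0` when this set is
empty (convention `F⁽⁻¹⁾(0|x) = -∞`, `F(-∞|x) = 0`). -/
open Classical in
theorem stmt_2 {α : Type*} [MeasurableSpace α]
    (μ : Measure α) [IsProbabilityMeasure μ]
    (κ : Kernel α ℕ) [IsMarkovKernel κ]
    (F : α → ℕ → ℝ)
    (hF : ∀ x n, F x n = (κ x {m | m ≤ n}).toReal)
    (s : ℝ) (hs : s ∈ Set.Ioo (0 : ℝ) 1) :
    ((μ.compProd κ) {p : α × ℕ | F p.1 p.2 ≤ s}).toReal =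
      ∫ x, (if ∃ k, F x k ≤ s then F x (sSup {k | F x k ≤ s}) else 0) ∂μ := by
  have hmono : ∀ x, Monotone (F x) := by
    intro x a b hab
    rw [hF, hF]
    exact ENNReal.toReal_mono (measure_ne_top _ _)
      (measure_mono (fun m hm => le_trans hm hab))
  have hFm : ∀ n : ℕ, Measurable fun x => F x n := by
    intro n
    have : (fun x => F x n) = fun x => (κ x {m | m ≤ n}).toReal := by
      ext x; exact hF x n
    rw [this]
    exact (Kernel.measurable_coe κ (measurableSet_le measurable_id measurable_const)).ennreal_toReal
  have hS : MeasurableSet {p : α × ℕ | F p.1 p.2 ≤ s} := by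
    have : {p : α × ℕ | F p.1 p.2 ≤ s} = ⋃ n, {x | F x n ≤ s} ×ˢ ({n} : Set ℕ) := by
      ext ⟨x, n⟩
      simp only [Set.mem_setOf_eq, Set.mem_iUnion, Set.mem_prod, Set.mem_singleton_iff]
      constructor
      · exact fun h => ⟨n, h, rfl⟩
      · rintro ⟨k, hk, rfl⟩; exact hk
    rw [this]
    exact MeasurableSet.iUnion fun n =>
      (measurableSet_le (hFm n) measurable_const).prod (measurableSet_singleton n)
  have key : ∀ x, (κ x {n | F x n ≤ s}).toReal
      = if ∃ k, F x k ≤ s then F x (sSup {k | F x k ≤ s}) else 0 := by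
    intro x
    by_cases h : ∃ k, F x k ≤ s
    · obtain ⟨k₀, hk₀⟩ : ∃ k₀, s < F x k₀ := by
        by_contra hcon
        push_neg at hcon
        have hle : ∀ k : ℕ, κ x {m | m ≤ k} ≤ ENNReal.ofReal s := by
          intro k
          have h1 : (κ x {m | m ≤ k}).toReal ≤ s := (hF x k) ▸ hcon k
          calc κ x {m | m ≤ k} = ENNReal.ofReal (κ x {m | m ≤ k}).toReal :=
                (ENNReal.ofReal_toReal (measure_ne_top _ _)).symm
            _ ≤ ENNReal.ofReal s := ENNReal.ofReal_le_ofReal h1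
        have hmonoset : Monotone (fun k : ℕ => {m | m ≤ k}) :=
          fun a b hab m hm => le_trans hm hab
        have hlim := tendsto_measure_iUnion_atTop (μ := κ x) hmonoset
        have huniv : (⋃ k : ℕ, {m | m ≤ k}) = Set.univ := by
          ext m; simp [Set.mem_iUnion]; exact ⟨m, le_refl m⟩
        rw [huniv, measure_univ] at hlim
        have : (1 : ENNReal) ≤ ENNReal.ofReal s := le_of_tendsto hlim
          (Filter.Eventually.of_forall hle)
        have hlt : ENNReal.ofReal s < 1 := ENNReal.ofReal_lt_one.mpr hs.2
        exact absurd this (not_le.mpr hlt)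
      have hbdd : BddAbove {k | F x k ≤ s} := by
        refine ⟨k₀, fun k hk => ?_⟩
        by_contra hlt
        push_neg at hlt
        exact absurd (le_trans (hmono x hlt.le) hk) (not_le.mpr hk₀)
      have hN := Nat.sSup_mem h hbdd
      set N := sSup {k | F x k ≤ s} with hNdef
      have hset : {n | F x n ≤ s} = {m | m ≤ N} := by
        ext n
        simp only [Set.mem_setOf_eq]
        constructor
        · exact fun hn => le_csSup hbdd hn
        · exact fun hn => le_trans (hmono x hn) hN
      rw [if_pos h, hset, ← hF]
    · rw [if_neg h]
      have : {n | F x n ≤ s} = ∅ := by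
        ext n
        simp only [Set.mem_setOf_eq, Set.mem_empty_iff_false, iff_false]
        exact fun hn => h ⟨n, hn⟩
      simp [this]
  rw [Measure.compProd_apply hS,
    ← integral_toReal (Kernel.measurable_kernel_prodMk_left hS).aemeasurable
      (ae_of_all _ fun x => measure_lt_top _ _)]
  exact integral_congr_ae (ae_of_all _ fun x => key x)
end

section
/- For an ordinal outcome Y on {0,…,k_max}, the distribution of the DPIT satisfies: Pr(G_0(F(Y|X)) ≤ s) = s for s ≤ c, Pr(G_0(F(Y|X)) ≤ s) = c for c < s < 1, and Pr(G_0(F(Y|X)) ≤ 1) = 1, where c = E_X[F(k_max − 1 | X)]. -/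
open MeasureTheory ProbabilityTheory

/- For an ordinal outcome, let `W = F(Y|X)` be the probability integral transform, with
values in `(0,1]`, CDF `G₀`, point mass at `1` (the event `Y = kmax`), and with
`c = E_X[F(kmax − 1 | X)] = Pr(W < 1)`; `G₀` is continuous on `(-∞, 1)` (the restriction
of `W` to `{W < 1}` is a continuous random variable). Then the distribution of the DPIT
`G₀(W)` satisfies: `Pr(G₀(W) ≤ s) = s` for `0 < s ≤ c`, `Pr(G₀(W) ≤ s) = c` for
`c < s < 1`, and `Pr(G₀(W) ≤ 1) = 1`. -/
theorem stmt_10 {Ω : Type*} [MeasurableSpace Ω]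
    (P : Measure Ω) [IsProbabilityMeasure P]
    (W : Ω → ℝ) (hW : Measurable W)
    (G₀ : ℝ → ℝ)
    (hG₀ : ∀ t, G₀ t = (P {ω | W ω ≤ t}).toReal)
    (hrange : ∀ ω, W ω ∈ Set.Ioc (0 : ℝ) 1)
    (hcont : ContinuousOn G₀ (Set.Iio 1))
    (c : ℝ) (hc : c ∈ Set.Ioo (0 : ℝ) 1)
    (hmass : (P {ω | W ω < 1}).toReal = c) :
    (∀ s : ℝ, 0 < s → s ≤ c → P {ω | G₀ (W ω) ≤ s} = ENNReal.ofReal s) ∧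
      (∀ s : ℝ, c < s → s < 1 → P {ω | G₀ (W ω) ≤ s} = ENNReal.ofReal c) ∧
      P {ω | G₀ (W ω) ≤ 1} = 1 := by
  have hfin : ∀ A : Set Ω, P A ≠ ⊤ := fun A => measure_ne_top P A
  have hofReal : ∀ t, P {ω | W ω ≤ t} = ENNReal.ofReal (G₀ t) := by
    intro t; rw [hG₀, ENNReal.ofReal_toReal (hfin _)]
  have hmono : Monotone G₀ := by
    intro a b hab
    rw [hG₀, hG₀]
    exact ENNReal.toReal_mono (hfin _) (measure_mono fun ω h => le_trans h hab)
  have hG0 : G₀ 0 = 0 := by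
    rw [hG₀]
    have : {ω | W ω ≤ (0:ℝ)} = ∅ := by
      ext ω
      simp only [Set.mem_setOf_eq, Set.mem_empty_iff_false, iff_false, not_le]
      exact (hrange ω).1
    rw [this, measure_empty, ENNReal.toReal_zero]
  have hG1 : G₀ 1 = 1 := by
    rw [hG₀]
    have : {ω | W ω ≤ (1:ℝ)} = Set.univ := by
      ext ω; simp [(hrange ω).2]
    rw [this, measure_univ, ENNReal.toReal_one]
  have hle_c : ∀ t, t < 1 → G₀ t ≤ c := by
    intro t ht
    rw [hG₀, ← hmass]
    exact ENNReal.toReal_mono (hfin _) (measure_mono fun ω h => lt_of_le_of_lt h ht)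
  have hmassE : P {ω | W ω < 1} = ENNReal.ofReal c := by
    rw [← hmass, ENNReal.ofReal_toReal (hfin _)]
  -- for any r with 0 ≤ r < c, some t < 1 has G₀ t > r
  have hsup : ∀ r : ℝ, 0 ≤ r → r < c → ∃ t, t < 1 ∧ r < G₀ t := by
    intro r hr0 hrc
    by_contra h
    push_neg at h
    have hU : {ω | W ω < 1} = ⋃ n : ℕ, {ω | W ω ≤ 1 - 1/(n+1)} := by
      ext ω
      simp only [Set.mem_setOf_eq, Set.mem_iUnion]
      constructor
      · intro hω
        obtain ⟨n, hn⟩ := exists_nat_one_div_lt (sub_pos.mpr hω)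
        exact ⟨n, by push_cast at hn ⊢; linarith⟩
      · rintro ⟨n, hn⟩
        have h1 : (0:ℝ) < 1/(n+1) := by positivity
        linarith
    have hdir : Directed (· ⊆ ·) (fun n : ℕ => {ω | W ω ≤ 1 - 1/(n+1)}) := by
      apply Monotone.directed_le
      intro m n hmn ω hω
      simp only [Set.mem_setOf_eq] at hω ⊢
      have : (1:ℝ)/(n+1) ≤ 1/(m+1) := by
        apply one_div_le_one_div_of_le (by positivity)
        linarith [(Nat.cast_le (α := ℝ)).mpr hmn]
      linarith
    have hle : P {ω | W ω < 1} ≤ ENNReal.ofReal r := by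
      rw [hU, hdir.measure_iUnion]
      apply iSup_le
      intro n
      rw [hofReal]
      apply ENNReal.ofReal_le_ofReal
      apply h
      have h1 : (0:ℝ) < 1/(n+1) := by positivity
      linarith
    have : c ≤ r := by
      rw [← hmass]
      calc (P {ω | W ω < 1}).toReal ≤ (ENNReal.ofReal r).toReal :=
            ENNReal.toReal_mono ENNReal.ofReal_ne_top hle
        _ = r := ENNReal.toReal_ofReal hr0
    linarith
  -- level sets: every value in [0, c) is attained by G₀ on (-∞, 1)
  have hlevel : ∀ r : ℝ, 0 ≤ r → r < c → ∃ u, u < 1 ∧ G₀ u = r := by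
    intro r hr0 hrc
    obtain ⟨t, ht1, htr⟩ := hsup r hr0 hrc
    have ht0 : 0 ≤ t := by
      by_contra h
      push_neg at h
      have := hmono h.le
      rw [hG0] at this
      linarith
    have hcont' : ContinuousOn G₀ (Set.Icc 0 t) :=
      hcont.mono fun x hx => lt_of_le_of_lt hx.2 ht1
    have hmem : r ∈ Set.Icc (G₀ 0) (G₀ t) := ⟨by rw [hG0]; exact hr0, htr.le⟩
    obtain ⟨u, hu, hur⟩ := intermediate_value_Icc ht0 hcont' hmem
    exact ⟨u, lt_of_le_of_lt hu.2 ht1, hur⟩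
  -- key set identity for c ≤ s < 1
  have hkey : ∀ s : ℝ, c ≤ s → s < 1 → {ω | G₀ (W ω) ≤ s} = {ω | W ω < 1} := by
    intro s hcs hs1
    ext ω
    simp only [Set.mem_setOf_eq]
    constructor
    · intro h
      rcases lt_or_eq_of_le (hrange ω).2 with h1 | h1
      · exact h1
      · rw [h1, hG1] at h; linarith
    · intro h
      exact le_trans (hle_c _ h) hcs
  refine ⟨?_, ?_, ?_⟩
  · intro s hs0 hsc
    rcases lt_or_eq_of_le hsc with hlt | heq
    · -- 0 < s < c
      obtain ⟨u, hu1, hus⟩ := hlevel s hs0.le hlt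
      have hlow : ENNReal.ofReal s ≤ P {ω | G₀ (W ω) ≤ s} := by
        rw [← hus, ← hofReal]
        apply measure_mono
        intro ω hω
        simp only [Set.mem_setOf_eq] at hω ⊢
        exact hmono hω
      have hup : P {ω | G₀ (W ω) ≤ s} ≤ ENNReal.ofReal s := by
        have htoReal : ∀ ε : ℝ, 0 < ε → (P {ω | G₀ (W ω) ≤ s}).toReal ≤ s + ε := by
          intro ε hε
          set ε' : ℝ := min ε ((c - s)/2) with hε'
          have hε'0 : 0 < ε' := lt_min hε (by linarith)
          have hε'c : s + ε' < c := by
            have : ε' ≤ (c - s)/2 := min_le_right _ _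
            linarith
          obtain ⟨t, ht1, hts⟩ := hlevel (s + ε') (by linarith) hε'c
          have hsub : {ω | G₀ (W ω) ≤ s} ⊆ {ω | W ω ≤ t} := by
            intro ω hω
            simp only [Set.mem_setOf_eq] at hω ⊢
            by_contra h
            push_neg at h
            have := hmono h.le
            rw [hts] at this
            linarith
          calc (P {ω | G₀ (W ω) ≤ s}).toReal ≤ (P {ω | W ω ≤ t}).toReal :=
                ENNReal.toReal_mono (hfin _) (measure_mono hsub)
            _ = G₀ t := (hG₀ t).symm
            _ = s + ε' := hts
            _ ≤ s + ε := by linarith [min_le_left ε ((c - s)/2)]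
        have h1 : (P {ω | G₀ (W ω) ≤ s}).toReal ≤ s :=
          le_of_forall_pos_le_add htoReal
        calc P {ω | G₀ (W ω) ≤ s}
            = ENNReal.ofReal (P {ω | G₀ (W ω) ≤ s}).toReal :=
              (ENNReal.ofReal_toReal (hfin _)).symm
          _ ≤ ENNReal.ofReal s := ENNReal.ofReal_le_ofReal h1
      exact le_antisymm hup hlow
    · -- s = c
      subst heq
      rw [hkey s le_rfl hc.2, hmassE]
  · intro s hcs hs1
    rw [hkey s hcs.le hs1, hmassE]
  · have : {ω | G₀ (W ω) ≤ 1} = Set.univ := by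
      ext ω
      simp only [Set.mem_setOf_eq, Set.mem_univ, iff_true]
      rw [hG₀]
      simpa using ENNReal.toReal_mono ENNReal.one_ne_top prob_le_one
    rw [this, measure_univ]
end
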